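/- Let L ∈ ℝ^{d×p} be such that LLᵀ is invertible, let q ∈ ℝᵈ, v ∈ ℝᵖ, and β ∈ ℝ. Let K = [L q] ∈ ℝ^{d×(p+1)} be L with the column q appended and let u = (v, β) ∈ ℝ^{p+1} be v with β appended, so that KKᵀ = LLᵀ + qqᵀ is invertible. Set α = qᵀ(KKᵀ)⁻¹q and γ = qᵀ(KKᵀ)⁻¹(Lv + βq). Then α < 1 and ‖R_K u‖² − ‖R_L v‖² = (β − γ)² / (1 − α); i.e., removing the column q from K increases the residual of u by exactly (β − γ)²/(1 − α). -/

import Mathlib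

open Matrix

noncomputable section

/-- The matrix `L` with the vector `q` appended as a last column. -/
def appendCol {d p : ℕ} (L : Matrix (Fin d) (Fin p) ℝ) (q : Fin d → ℝ) :
    Matrix (Fin d) (Fin (p + 1)) ℝ :=
  Matrix.of fun i => Fin.snoc (L i) (q i)

/-- `P_L = Lᵀ (L Lᵀ)⁻¹ L`, the orthogonal projection of `ℝᵖ` onto the row space of `L`. -/
def projRow {d p : ℕ} (L : Matrix (Fin d) (Fin p) ℝ) : Matrix (Fin p) (Fin p) ℝ :=
  Lᵀ * (L * Lᵀ)⁻¹ * L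

/-- `R_L = I − P_L`. -/
def residRow {d p : ℕ} (L : Matrix (Fin d) (Fin p) ℝ) : Matrix (Fin p) (Fin p) ℝ :=
  1 - projRow L

lemma vecMulVec_mulVec' {n m : Type*} [Fintype m] (a : n → ℝ) (b x : m → ℝ) :
    vecMulVec a b *ᵥ x = (b ⬝ᵥ x) • a := by
  funext i
  simp [mulVec, vecMulVec_apply, dotProduct, Finset.sum_mul, mul_assoc, Finset.mul_sum,
    mul_comm, mul_left_comm]

lemma vecMulVec_posSemidef {n : Type*} [Fintype n] (q : n → ℝ) :
    (vecMulVec q q).PosSemidef := by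
  refine PosSemidef.of_dotProduct_mulVec_nonneg ?_ ?_
  · ext i j
    simp [vecMulVec_apply, mul_comm, Matrix.IsHermitian, conjTranspose_apply]
  · intro x
    rw [vecMulVec_mulVec']
    simp only [star_trivial, dotProduct_smul, smul_eq_mul]
    rw [dotProduct_comm]
    exact mul_self_nonneg _

lemma posDef_of_posSemidef_isUnit {n : Type*} [Fintype n] [DecidableEq n]
    {A : Matrix n n ℝ} (h : A.PosSemidef) (hu : IsUnit A) : A.PosDef := by
  refine PosDef.of_dotProduct_mulVec_pos h.1 fun x hx => ?_
  rcases lt_or_eq_of_le (h.dotProduct_mulVec_nonneg x) with h' | h'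
  · exact h'
  · exfalso
    have := (h.dotProduct_mulVec_zero_iff x).mp h'.symm
    exact hx (by simpa using (Matrix.mulVec_injective_iff_isUnit.mpr hu).eq_iff.mp (by simp [this]))

lemma resid_norm {d p : ℕ} (M : Matrix (Fin d) (Fin p) ℝ) (hM : IsUnit (M * Mᵀ))
    (x : Fin p → ℝ) :
    (residRow M *ᵥ x) ⬝ᵥ (residRow M *ᵥ x) =
      x ⬝ᵥ x - (M *ᵥ x) ⬝ᵥ ((M * Mᵀ)⁻¹ *ᵥ (M *ᵥ x)) := by
  have hdet : IsUnit (M * Mᵀ).det := (Matrix.isUnit_iff_isUnit_det _).mp hM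
  set B := (M * Mᵀ)⁻¹ with hB
  set m := M *ᵥ x with hm
  set c := B *ᵥ m with hc
  have hres : residRow M *ᵥ x = x - Mᵀ *ᵥ c := by
    simp [residRow, projRow, sub_mulVec, mulVec_mulVec, hc, hm, hB, Matrix.mul_assoc]
  have hxb : x ⬝ᵥ (Mᵀ *ᵥ c) = m ⬝ᵥ c := by
    rw [dotProduct_mulVec, vecMul_transpose]
  have hbb : (Mᵀ *ᵥ c) ⬝ᵥ (Mᵀ *ᵥ c) = m ⬝ᵥ c := by
    rw [dotProduct_mulVec, vecMul_transpose, mulVec_mulVec, hc, mulVec_mulVec,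
      Matrix.mul_nonsing_inv _ hdet, one_mulVec, dotProduct_comm]
  rw [hres, sub_dotProduct, dotProduct_sub, dotProduct_sub, hxb, hbb,
    dotProduct_comm (Mᵀ *ᵥ c) x, hxb]
  ring

lemma sherman {d : ℕ} {A : Matrix (Fin d) (Fin d) ℝ} (hA : IsUnit A)
    (q y : Fin d → ℝ) {C : Matrix (Fin d) (Fin d) ℝ} (hC : C = A + vecMulVec q q)
    (hCu : IsUnit C) (h1s : (1 : ℝ) + q ⬝ᵥ (A⁻¹ *ᵥ q) ≠ 0) :
    C⁻¹ *ᵥ y = A⁻¹ *ᵥ y -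
      ((q ⬝ᵥ (A⁻¹ *ᵥ y)) / (1 + q ⬝ᵥ (A⁻¹ *ᵥ q))) • (A⁻¹ *ᵥ q) := by
  have hAdet : IsUnit A.det := (Matrix.isUnit_iff_isUnit_det _).mp hA
  have hCdet : IsUnit C.det := (Matrix.isUnit_iff_isUnit_det _).mp hCu
  set s := q ⬝ᵥ (A⁻¹ *ᵥ q) with hs
  set t := q ⬝ᵥ (A⁻¹ *ᵥ y) with ht
  set z := A⁻¹ *ᵥ y - (t / (1 + s)) • (A⁻¹ *ᵥ q) with hz
  have key : C *ᵥ z = y := by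
    have hA1 : A *ᵥ (A⁻¹ *ᵥ y) = y := by
      rw [mulVec_mulVec, Matrix.mul_nonsing_inv _ hAdet, one_mulVec]
    have hA2 : A *ᵥ (A⁻¹ *ᵥ q) = q := by
      rw [mulVec_mulVec, Matrix.mul_nonsing_inv _ hAdet, one_mulVec]
    have hqz : q ⬝ᵥ z = t - (t / (1 + s)) * s := by
      simp [hz, dotProduct_sub, dotProduct_smul, smul_eq_mul, ← hs, ← ht]
    rw [hC, add_mulVec, vecMulVec_mulVec', hqz, hz, mulVec_sub, mulVec_smul, hA1, hA2]
    funext i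
    simp only [Pi.add_apply, Pi.sub_apply, Pi.smul_apply, smul_eq_mul]
    field_simp
    ring
  calc C⁻¹ *ᵥ y = C⁻¹ *ᵥ (C *ᵥ z) := by rw [key]
  _ = z := by rw [mulVec_mulVec, Matrix.nonsing_inv_mul _ hCdet, one_mulVec]

lemma dot_symm {n : Type*} [Fintype n] (M : Matrix n n ℝ) (h : Mᵀ = M) (x y : n → ℝ) :
    x ⬝ᵥ (M *ᵥ y) = y ⬝ᵥ (M *ᵥ x) := by
  rw [dotProduct_mulVec, ← h, vecMul_transpose, dotProduct_comm, h]

theorem stmt19 {d p : ℕ} (L : Matrix (Fin d) (Fin p) ℝ)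
    (hL : IsUnit (L * Lᵀ))
    (q : Fin d → ℝ) (v : Fin p → ℝ) (β : ℝ)
    (K : Matrix (Fin d) (Fin (p + 1)) ℝ) (hK : K = appendCol L q)
    (u : Fin (p + 1) → ℝ) (hu : u = Fin.snoc v β)
    (α γ : ℝ) (hα : α = q ⬝ᵥ ((K * Kᵀ)⁻¹ *ᵥ q))
    (hγ : γ = q ⬝ᵥ ((K * Kᵀ)⁻¹ *ᵥ (L *ᵥ v + β • q))) :
    K * Kᵀ = L * Lᵀ + vecMulVec q q ∧
      IsUnit (K * Kᵀ) ∧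
      α < 1 ∧
      (residRow K *ᵥ u) ⬝ᵥ (residRow K *ᵥ u) -
          (residRow L *ᵥ v) ⬝ᵥ (residRow L *ᵥ v) =
        (β - γ) ^ 2 / (1 - α) := by
  have hKC : K * Kᵀ = L * Lᵀ + vecMulVec q q := by
    ext i j
    simp [hK, mul_apply, appendCol, Fin.sum_univ_castSucc, vecMulVec_apply, Matrix.add_apply]
  set A := L * Lᵀ with hAdef
  have hAps : A.PosSemidef := by
    have := posSemidef_self_mul_conjTranspose L
    simpa [conjTranspose_eq_transpose_of_trivial] using this
  have hApd : A.PosDef := posDef_of_posSemidef_isUnit hAps hL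
  have hCpd : (K * Kᵀ).PosDef := by
    rw [hKC]; exact hApd.add_posSemidef (vecMulVec_posSemidef q)
  have hCu : IsUnit (K * Kᵀ) := hCpd.isUnit
  have hAinvT : A⁻¹ᵀ = A⁻¹ := by
    rw [transpose_nonsing_inv, hAdef, transpose_mul, transpose_transpose]
  set s := q ⬝ᵥ (A⁻¹ *ᵥ q) with hsdef
  have hs0 : 0 ≤ s := by simpa using hApd.inv.posSemidef.dotProduct_mulVec_nonneg q
  have h1s : (0 : ℝ) < 1 + s := by linarith
  have h1s' : (1 : ℝ) + s ≠ 0 := ne_of_gt h1s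
  set w := L *ᵥ v with hwdef
  set t := q ⬝ᵥ (A⁻¹ *ᵥ w) with htdef
  set m := L *ᵥ v + β • q with hmdef
  have hqm : q ⬝ᵥ (A⁻¹ *ᵥ m) = t + β * s := by
    rw [hmdef, mulVec_add, mulVec_smul, dotProduct_add, dotProduct_smul, ← hwdef, ← htdef,
      smul_eq_mul, ← hsdef]
  have hαval : α = s - s / (1 + s) * s := by
    rw [hα, sherman hL q q hKC hCu h1s', dotProduct_sub, dotProduct_smul, smul_eq_mul, ← hsdef]
  have hγval : γ = (t + β * s) - (t + β * s) / (1 + s) * s := by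
    rw [hγ, sherman hL q m hKC hCu h1s', dotProduct_sub, dotProduct_smul,
      smul_eq_mul, hqm, ← hsdef]
  have hαval2 : α = s / (1 + s) := by
    rw [hαval]; field_simp; ring
  have hα1 : α < 1 := by
    rw [hαval2, div_lt_one h1s]; linarith
  have hKu : K *ᵥ u = m := by
    funext i
    simp [hK, hu, hmdef, mulVec, dotProduct, appendCol, Fin.sum_univ_castSucc, mul_comm]
  have huu : u ⬝ᵥ u = v ⬝ᵥ v + β ^ 2 := by
    simp [hu, dotProduct, Fin.sum_univ_castSucc, sq]
  have hmq : m ⬝ᵥ (A⁻¹ *ᵥ q) = t + β * s := by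
    rw [dot_symm _ hAinvT, hqm]
  have hwq : w ⬝ᵥ (A⁻¹ *ᵥ q) = t := by
    rw [dot_symm _ hAinvT, ← htdef]
  have hmm : m ⬝ᵥ (A⁻¹ *ᵥ m) = w ⬝ᵥ (A⁻¹ *ᵥ w) + 2 * β * t + β ^ 2 * s := by
    rw [hmdef, mulVec_add, mulVec_smul, dotProduct_add, add_dotProduct, add_dotProduct,
      dotProduct_smul, dotProduct_smul, smul_dotProduct, smul_dotProduct]
    simp only [smul_eq_mul, ← hwdef, ← htdef, ← hsdef]
    rw [show w ⬝ᵥ (A⁻¹ *ᵥ q) = t from hwq]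
    ring
  have hCinvm : m ⬝ᵥ ((K * Kᵀ)⁻¹ *ᵥ m) =
      (w ⬝ᵥ (A⁻¹ *ᵥ w) + 2 * β * t + β ^ 2 * s) - (t + β * s) / (1 + s) * (t + β * s) := by
    rw [sherman hL q m hKC hCu h1s', dotProduct_sub, dotProduct_smul, smul_eq_mul, hqm, ← hsdef,
      hmm, hmq]
  refine ⟨hKC, hCu, hα1, ?_⟩
  rw [resid_norm K hCu u, resid_norm L hL v, hKu, huu, hCinvm, ← hAdef, ← hwdef]
  rw [hαval, hγval]
  have hden : 1 - (s - s / (1 + s) * s) = 1 / (1 + s) := by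
    field_simp
    ring
  rw [hden]
  field_simp
  ring
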